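/- For every integer k ≥ 2 there exists an invariant Borel probability measure μ on Ω that is k-Gibbs but is not a Gibbs measure. -/

import Mathlib

open MeasureTheory Filter

namespace Dimers

/-- Vertices of the grid graph on `ℤ³`. -/
abbrev V : Type := Fin 3 → ℤ

/-- The `i`-th standard unit vector of `ℤ³`. -/
def unitVec (i : Fin 3) : V := fun j => if j = i then 1 else 0

/-- Grid adjacency: two vertices are adjacent iff they differ by a standard unit vector. -/
def Adj (x y : V) : Prop := ∃ i : Fin 3, y = x + unitVec i ∨ x = y + unitVec i

/-- A vertex is even if its coordinate sum is even. -/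
def IsEven (x : V) : Prop := (x 0 + x 1 + x 2) % 2 = 0

instance : DecidablePred IsEven := fun x =>
  inferInstanceAs (Decidable ((x 0 + x 1 + x 2) % 2 = 0))

/-- A dimer tiling (perfect matching) of `ℤ³`, encoded by the involution sending each vertex
to the vertex it is matched with. -/
def IsTiling (m : V → V) : Prop := (∀ x, Adj x (m x)) ∧ ∀ x, m (m x) = x

/-- `Omega` is the space of dimer tilings of `ℤ³`. -/
abbrev Omega : Type := {m : V → V // IsTiling m}

theorem isTiling_translate {m : V → V} (h : IsTiling m) (v : V) :
    IsTiling fun x => m (x - v) + v := by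
  obtain ⟨h1, h2⟩ := h
  constructor
  · intro x
    show Adj x (m (x - v) + v)
    obtain ⟨i, hi | hi⟩ := h1 (x - v)
    · exact ⟨i, Or.inl (by rw [hi]; abel)⟩
    · refine ⟨i, Or.inr ?_⟩
      rw [sub_eq_iff_eq_add] at hi
      exact hi.trans (by abel)
  · intro x
    show m (m (x - v) + v - v) + v = x
    have h3 : m (x - v) + v - v = m (x - v) := by abel
    rw [h3, h2]
    abel

/-- Translation of a tiling by the vector `v`. -/
def translate (v : V) (τ : Omega) : Omega :=
  ⟨fun x => τ.1 (x - v) + v, isTiling_translate τ.2 v⟩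

/-- A measure on `Omega` is invariant if it is preserved by translation by every even vector. -/
def Invariant (μ : Measure Omega) : Prop :=
  ∀ v : V, IsEven v → Measure.map (translate v) μ = μ

/-- An invariant measure is ergodic if every Borel set invariant under all even translations
has measure `0` or `1`. -/
def IsErgodicMeasure (μ : Measure Omega) : Prop :=
  Invariant μ ∧ ∀ A : Set Omega, MeasurableSet A →
    (∀ v : V, IsEven v → translate v ⁻¹' A = A) → μ A = 0 ∨ μ A = 1

/-- The mean current of a measure on `Omega`: the `i`-th coordinate is
`μ{τ : e_i ∈ τ} − μ{τ : −e_i ∈ τ}`. -/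
noncomputable def meanCurrent (μ : Measure Omega) : Fin 3 → ℝ := fun i =>
  (μ {τ : Omega | τ.1 0 = unitVec i}).toReal - (μ {τ : Omega | τ.1 0 = -unitVec i}).toReal

/-- The mean-current octahedron `O`. -/
def Oct : Set (Fin 3 → ℝ) := {s | |s 0| + |s 1| + |s 2| ≤ 1}

/-- The Shannon entropy `H_Λ(μ)` of the restriction of `μ` to the finite window `Λ`
(the restriction of a tiling to `Λ` records the partner of every vertex of `Λ`, i.e. all
edges with at least one endpoint in `Λ`). -/
noncomputable def boxEntropy (Λ : Finset V) (μ : Measure Omega) : ℝ :=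
  ∑' σ : (↥Λ → V), Real.negMulLog (μ {τ : Omega | ∀ x : ↥Λ, τ.1 x.1 = σ x}).toReal

/-- The cube `Λ_n = ([-n,n] ∩ ℤ)³`. -/
noncomputable def cube (n : ℕ) : Finset V := Fintype.piFinset fun _ : Fin 3 => Finset.Icc (-(n : ℤ)) (n : ℤ)

/-- The specific entropy (entropy per site) of a measure on `Omega`. -/
noncomputable def specificEntropy (μ : Measure Omega) : ℝ :=
  limsup (fun n : ℕ => boxEntropy (cube n) μ / ((cube n).card : ℝ)) atTop

/-- The mean-current entropy function `ent`. -/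
noncomputable def ent (s : Fin 3 → ℝ) : ℝ :=
  sSup {h : ℝ | ∃ μ : Measure Omega, IsProbabilityMeasure μ ∧ Invariant μ ∧
    meanCurrent μ = s ∧ specificEntropy μ = h}

/-- The uniform Gibbs condition in the finite window `Λ`: any two boundary-compatible
configurations (tilings whose symmetric difference consists of edges with both endpoints
in `Λ`) give cylinder sets of equal measure. -/
def GibbsCond (μ : Measure Omega) (Λ : Finset V) : Prop :=
  ∀ τ τ' : Omega,
    (∀ x : V, τ.1 x ≠ τ'.1 x → x ∈ Λ ∧ τ.1 x ∈ Λ ∧ τ'.1 x ∈ Λ) →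
    μ {σ : Omega | ∀ x ∈ Λ, σ.1 x = τ.1 x} = μ {σ : Omega | ∀ x ∈ Λ, σ.1 x = τ'.1 x}

/-- A (uniform) Gibbs measure. -/
def IsGibbs (μ : Measure Omega) : Prop :=
  Invariant μ ∧ ∀ Λ : Finset V, GibbsCond μ Λ

/-- The cubic box `x + {0,1,…,k−1}³`. -/
noncomputable def kbox (k : ℕ) (x : V) : Finset V :=
  Fintype.piFinset fun i : Fin 3 => Finset.Icc (x i) (x i + (k : ℤ) - 1)

/-- An invariant measure is `k`-Gibbs if the uniform Gibbs condition holds for all cubic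
boxes of side length `k`. -/
def IsKGibbs (k : ℕ) (μ : Measure Omega) : Prop :=
  Invariant μ ∧ ∀ x : V, GibbsCond μ (kbox k x)


-- ### helpers

lemma uv (i j : Fin 3) : unitVec i j = if j = i then 1 else 0 := rfl

@[simp] lemma uv00 : unitVec 0 0 = 1 := rfl
@[simp] lemma uv01 : unitVec 0 1 = 0 := rfl
@[simp] lemma uv02 : unitVec 0 2 = 0 := rfl
@[simp] lemma uv10 : unitVec 1 0 = 0 := rfl
@[simp] lemma uv11 : unitVec 1 1 = 1 := rfl
@[simp] lemma uv12 : unitVec 1 2 = 0 := rfl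
@[simp] lemma uv20 : unitVec 2 0 = 0 := rfl
@[simp] lemma uv21 : unitVec 2 1 = 0 := rfl
@[simp] lemma uv22 : unitVec 2 2 = 1 := rfl

lemma isEven_iff {x : V} : IsEven x ↔ (x 0 + x 1 + x 2) % 2 = 0 := Iff.rfl

lemma parity_add (x : V) (i : Fin 3) : IsEven (x + unitVec i) ↔ ¬ IsEven x := by
  fin_cases i <;>
    · simp only [isEven_iff, Pi.add_apply, unitVec, Fin.ext_iff]
      norm_num
      omega

lemma parity_sub (x : V) (i : Fin 3) : IsEven (x - unitVec i) ↔ ¬ IsEven x := by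
  fin_cases i <;>
    · simp only [isEven_iff, Pi.sub_apply, unitVec, Fin.ext_iff]
      norm_num
      omega

/-- the partner of `x` in an `Omega` element is `x ± e i`. -/
lemma partner_cases (τ : Omega) (x : V) :
    ∃ i : Fin 3, τ.1 x = x + unitVec i ∨ τ.1 x = x - unitVec i := by
  obtain ⟨i, h | h⟩ := τ.2.1 x
  · exact ⟨i, Or.inl h⟩
  · exact ⟨i, Or.inr (eq_sub_of_add_eq h.symm)⟩

lemma parity_partner (τ : Omega) (x : V) : IsEven (τ.1 x) ↔ ¬ IsEven x := by
  obtain ⟨i, h | h⟩ := partner_cases τ x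
  · rw [h]; exact parity_add x i
  · rw [h]; exact parity_sub x i

-- ### the tilings σ_c

/-- direction vector by position in the slab period. `t = 0`: up slab (`+e₃`);
`t = k+1`: down slab (`-e₃`); otherwise buffer (`+e₁`). -/
def dvec (k : ℕ) (t : ℤ) : V :=
  if t = 0 then unitVec 2 else if t = (k : ℤ) + 1 then -unitVec 2 else unitVec 0

@[simp] lemma dvec_one (k : ℕ) (t : ℤ) : dvec k t 1 = 0 := by
  unfold dvec; split_ifs <;> simp

/-- the slab tiling with phase `c`. -/
def sig (k : ℕ) (c : ℤ) : V → V := fun x =>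
  if IsEven x then x + dvec k ((x 1 - c) % (2 * (k : ℤ) + 2))
  else x - dvec k ((x 1 - c) % (2 * (k : ℤ) + 2))

lemma sig_even {k : ℕ} {c : ℤ} {x : V} (h : IsEven x) :
    sig k c x = x + dvec k ((x 1 - c) % (2 * (k : ℤ) + 2)) := by simp [sig, h]

lemma sig_odd {k : ℕ} {c : ℤ} {x : V} (h : ¬ IsEven x) :
    sig k c x = x - dvec k ((x 1 - c) % (2 * (k : ℤ) + 2)) := by simp [sig, h]

lemma isTiling_sig (k : ℕ) (c : ℤ) : IsTiling (sig k c) := by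
  constructor
  · intro x
    unfold sig dvec
    split_ifs
    · exact ⟨2, Or.inl rfl⟩
    · exact ⟨2, Or.inr (by abel)⟩
    · exact ⟨0, Or.inl rfl⟩
    · exact ⟨2, Or.inr (by abel)⟩
    · exact ⟨2, Or.inl (by abel)⟩
    · exact ⟨0, Or.inr (by abel)⟩
  · intro x
    by_cases h : IsEven x
    · rw [sig_even h]
      have h1 : (x + dvec k ((x 1 - c) % (2 * (k : ℤ) + 2))) 1 = x 1 := by
        simp [Pi.add_apply]
      have h2 : ¬ IsEven (x + dvec k ((x 1 - c) % (2 * (k : ℤ) + 2))) := by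
        unfold dvec; split_ifs
        · rw [parity_add]; simpa using h
        · rw [show x + -unitVec 2 = x - unitVec 2 by abel, parity_sub]; simpa using h
        · rw [parity_add]; simpa using h
      rw [sig_odd h2, h1]; abel
    · rw [sig_odd h]
      have h1 : (x - dvec k ((x 1 - c) % (2 * (k : ℤ) + 2))) 1 = x 1 := by
        simp [Pi.sub_apply]
      have h2 : IsEven (x - dvec k ((x 1 - c) % (2 * (k : ℤ) + 2))) := by
        unfold dvec; split_ifs
        · rw [parity_sub]; simpa using fun hh => h hh
        · rw [show x - -unitVec 2 = x + unitVec 2 by abel, parity_add]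
          simpa using fun hh => h hh
        · rw [parity_sub]; simpa using fun hh => h hh
      rw [sig_even h2, h1]; abel

/-- the tiling `σ_c` as an element of `Omega`. -/
def Sc (k : ℕ) (c : ℤ) : Omega := ⟨sig k c, isTiling_sig k c⟩

end Dimers

namespace Dimers

open scoped ENNReal

-- ### the measure

noncomputable def mu (k : ℕ) : Measure Omega :=
  ((2 * (k : ℝ≥0∞) + 2))⁻¹ •
    ∑ c ∈ Finset.Ico (0 : ℤ) (2 * (k : ℤ) + 2), Measure.dirac (Sc k c)

lemma cyl_measurable (Λ : Finset V) (f : V → V) :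
    MeasurableSet {σ : Omega | ∀ x ∈ Λ, σ.1 x = f x} := by
  have : {σ : Omega | ∀ x ∈ Λ, σ.1 x = f x} =
      ⋂ x ∈ (Λ : Set V), {σ : Omega | σ.1 x = f x} := by
    ext σ; simp
  rw [this]
  refine MeasurableSet.biInter (Λ : Set V).to_countable (fun x _ => ?_)
  have he : Measurable fun g : V → V => g x := measurable_pi_apply x
  have hm : Measurable (fun σ : Omega => σ.1 x) := he.comp measurable_subtype_coe
  exact hm (measurableSet_singleton (f x))

lemma measurable_translate (v : V) : Measurable (translate v) := by
  have key : Measurable fun (τ : Omega) (x : V) => τ.1 (x - v) + v := by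
    refine measurable_pi_lambda _ fun x => ?_
    have h1 : Measurable fun g : V → V => g (x - v) := measurable_pi_apply (x - v)
    exact ((Measurable.of_discrete (f := fun y : V => y + v)).comp h1).comp
      measurable_subtype_coe
  exact key.subtype_mk

lemma mu_apply (k : ℕ) {S : Set Omega} (hS : MeasurableSet S) :
    mu k S = ((2 * (k : ℝ≥0∞) + 2))⁻¹ *
      ∑ c ∈ Finset.Ico (0 : ℤ) (2 * (k : ℤ) + 2), S.indicator 1 (Sc k c) := by
  rw [mu, Measure.smul_apply, smul_eq_mul]
  congr 1
  rw [Measure.coe_finset_sum]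
  simp only [Finset.sum_apply]
  exact Finset.sum_congr rfl fun c _ => Measure.dirac_apply' _ hS

lemma two_k_ne_zero (k : ℕ) : (2 * (k : ℝ≥0∞) + 2) ≠ 0 := by
  simp

lemma two_k_ne_top (k : ℕ) : (2 * (k : ℝ≥0∞) + 2) ≠ ⊤ := by
  simp [ENNReal.mul_ne_top, ENNReal.natCast_ne_top]

instance mu_prob (k : ℕ) : IsProbabilityMeasure (mu k) := by
  constructor
  rw [mu_apply k MeasurableSet.univ]
  have h1 : ∀ c ∈ Finset.Ico (0 : ℤ) (2 * (k : ℤ) + 2),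
      (Set.univ : Set Omega).indicator (1 : Omega → ℝ≥0∞) (Sc k c) = 1 := fun c _ => by
    simp
  rw [Finset.sum_congr rfl h1, Finset.sum_const, Int.card_Ico]
  have h2 : (2 * (k : ℤ) + 2 - 0).toNat = 2 * k + 2 := by omega
  rw [nsmul_eq_mul, h2]
  have h3 : ((2 * k + 2 : ℕ) : ℝ≥0∞) = 2 * (k : ℝ≥0∞) + 2 := by push_cast; ring
  rw [h3, mul_one, ENNReal.inv_mul_cancel (two_k_ne_zero k) (two_k_ne_top k)]

end Dimers

namespace Dimers

-- ### invariance

lemma sig_mod (k : ℕ) (c : ℤ) : sig k (c % (2 * (k : ℤ) + 2)) = sig k c := by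
  funext x
  unfold sig
  have h : (x 1 - c % (2 * (k : ℤ) + 2)) % (2 * (k : ℤ) + 2)
      = (x 1 - c) % (2 * (k : ℤ) + 2) := by
    conv_lhs => rw [Int.sub_emod]
    rw [Int.emod_emod_of_dvd _ dvd_rfl, ← Int.sub_emod]
  rw [h]

lemma Sc_mod (k : ℕ) (c : ℤ) : Sc k (c % (2 * (k : ℤ) + 2)) = Sc k c :=
  Subtype.ext (sig_mod k c)

lemma even_sum {v : V} (hv : IsEven v) : (v 0 + v 1 + v 2) % 2 = 0 := hv

lemma translate_Sc (k : ℕ) (c : ℤ) {v : V} (hv : IsEven v) :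
    translate v (Sc k c) = Sc k (c + v 1) := by
  apply Subtype.ext
  funext x
  show sig k c (x - v) + v = sig k (c + v 1) x
  have hpar : IsEven (x - v) ↔ IsEven x := by
    have := even_sum hv
    simp only [isEven_iff, Pi.sub_apply]
    omega
  have ht : (x - v) 1 - c = x 1 - (c + v 1) := by
    simp only [Pi.sub_apply]; ring
  by_cases h : IsEven x
  · rw [sig_even (hpar.mpr h), sig_even h, ht]; abel
  · rw [sig_odd (fun hh => h (hpar.mp hh)), sig_odd h, ht]; abel

lemma map_finset_sum {ι : Type*} (s : Finset ι) (μ : ι → Measure Omega)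
    {f : Omega → Omega} (hf : Measurable f) :
    Measure.map f (∑ i ∈ s, μ i) = ∑ i ∈ s, Measure.map f (μ i) := by
  classical
  induction s using Finset.induction_on with
  | empty => simp
  | insert _ _ hni ih =>
      rw [Finset.sum_insert hni, Finset.sum_insert hni, Measure.map_add _ _ hf, ih]

lemma mu_invariant (k : ℕ) : Invariant (mu k) := by
  intro v hv
  set P : ℤ := 2 * (k : ℤ) + 2 with hP
  have hPpos : 0 < P := by positivity
  rw [mu, Measure.map_smul, map_finset_sum _ _ (measurable_translate v)]
  congr 1
  have hterm : ∀ c : ℤ, Measure.map (translate v) (Measure.dirac (Sc k c))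
      = Measure.dirac (Sc k ((c + v 1) % P)) := by
    intro c
    rw [Measure.map_dirac' (measurable_translate v), translate_Sc k c hv, Sc_mod]
  calc ∑ c ∈ Finset.Ico (0 : ℤ) P, Measure.map (translate v) (Measure.dirac (Sc k c))
      = ∑ c ∈ Finset.Ico (0 : ℤ) P, Measure.dirac (Sc k ((c + v 1) % P)) := by
        exact Finset.sum_congr rfl fun c _ => hterm c
    _ = ∑ c ∈ Finset.Ico (0 : ℤ) P, Measure.dirac (Sc k c) := by
        refine Finset.sum_nbij' (fun c => (c + v 1) % P) (fun c => (c - v 1) % P)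
          ?_ ?_ ?_ ?_ ?_
        · intro a ha
          simp only [Finset.mem_Ico]
          exact ⟨Int.emod_nonneg _ (ne_of_gt hPpos), Int.emod_lt_of_pos _ hPpos⟩
        · intro a ha
          simp only [Finset.mem_Ico]
          exact ⟨Int.emod_nonneg _ (ne_of_gt hPpos), Int.emod_lt_of_pos _ hPpos⟩
        · intro a ha
          simp only [Finset.mem_Ico] at ha
          have h1 : ((a + v 1) % P - v 1) % P = (a + v 1 - v 1) % P := by
            conv_lhs => rw [Int.sub_emod, Int.emod_emod_of_dvd _ dvd_rfl, ← Int.sub_emod]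
          show ((a + v 1) % P - v 1) % P = a
          rw [h1]
          simp only [add_sub_cancel_right]
          exact Int.emod_eq_of_lt ha.1 ha.2
        · intro a ha
          simp only [Finset.mem_Ico] at ha
          have h1 : ((a - v 1) % P + v 1) % P = (a - v 1 + v 1) % P := by
            conv_lhs => rw [Int.add_emod, Int.emod_emod_of_dvd _ dvd_rfl, ← Int.add_emod]
          show ((a - v 1) % P + v 1) % P = a
          rw [h1]
          simp only [sub_add_cancel]
          exact Int.emod_eq_of_lt ha.1 ha.2
        · intro a ha
          rfl

end Dimers

namespace Dimers

-- ### combinatorial helpers for the rigidity lemma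

lemma dvec0 (k : ℕ) : dvec k 0 = unitVec 2 := by simp [dvec]

lemma dveck (k : ℕ) : dvec k ((k : ℤ) + 1) = -unitVec 2 := by
  have h : ((k : ℤ) + 1) ≠ 0 := by positivity
  rw [dvec, if_neg h, if_pos rfl]

lemma dvecb (k : ℕ) {t : ℤ} (h0 : t ≠ 0) (h1 : t ≠ (k : ℤ) + 1) :
    dvec k t = unitVec 0 := by
  rw [dvec, if_neg h0, if_neg h1]

lemma F1_le (τ : Omega) (x : V) : τ.1 x 0 + τ.1 x 2 ≤ x 0 + x 2 + 1 := by
  rcases partner_cases τ x with ⟨i, h | h⟩ <;> rw [h] <;> fin_cases i <;> simp <;> omega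

lemma F2_le (τ : Omega) (x : V) : τ.1 x 0 - τ.1 x 2 ≤ x 0 - x 2 + 1 := by
  rcases partner_cases τ x with ⟨i, h | h⟩ <;> rw [h] <;> fin_cases i <;> simp <;> omega

lemma F1_cases (τ : Omega) (x : V) (h : τ.1 x 0 + τ.1 x 2 = x 0 + x 2 + 1) :
    τ.1 x = x + unitVec 0 ∨ τ.1 x = x + unitVec 2 := by
  rcases partner_cases τ x with ⟨i, hc | hc⟩ <;> fin_cases i <;> rw [hc] at h ⊢ <;>
    simp at h ⊢ <;> omega

lemma F2_cases (τ : Omega) (x : V) (h : τ.1 x 0 - τ.1 x 2 = x 0 - x 2 + 1) :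
    τ.1 x = x + unitVec 0 ∨ τ.1 x = x - unitVec 2 := by
  rcases partner_cases τ x with ⟨i, hc | hc⟩ <;> fin_cases i <;> rw [hc] at h ⊢ <;>
    simp at h ⊢ <;> omega

lemma sum_invol (D : Finset V) (m : V → V)
    (hmD : ∀ y ∈ D, m y ∈ D) (hpar : ∀ y, IsEven (m y) ↔ ¬ IsEven y)
    (hinv : ∀ y, m (m y) = y) (F : V → ℤ) :
    ∑ x ∈ D.filter IsEven, F (m x) = ∑ y ∈ D.filter (fun y => ¬ IsEven y), F y := by
  refine Finset.sum_nbij' m m ?_ ?_ ?_ ?_ ?_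
  · intro a ha
    rw [Finset.mem_filter] at ha ⊢
    exact ⟨hmD a ha.1, (hpar a).not_left.mpr (by simpa using ha.2)⟩
  · intro a ha
    rw [Finset.mem_filter] at ha ⊢
    refine ⟨hmD a ha.1, ?_⟩
    by_contra hodd
    exact ha.2 (by rw [← hinv a]; exact (hpar (m a)).mpr hodd)
  · intro a _; exact hinv a
  · intro a _; exact hinv a
  · intro a _; rfl

end Dimers

namespace Dimers

lemma kbox_coord {k : ℕ} {x₀ y : V} (h : y ∈ kbox k x₀) (i : Fin 3) :
    x₀ i ≤ y i ∧ y i ≤ x₀ i + (k : ℤ) - 1 := by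
  rw [kbox, Fintype.mem_piFinset] at h
  simpa [Finset.mem_Icc] using h i

/-- The central rigidity lemma: if `τ` agrees with some `σ_c` on a `k`-box and `τ'` differs
from `τ` only inside that box, then `τ' = τ`. -/
theorem key (k : ℕ) (c : ℤ) (x₀ : V) (τ τ' : Omega)
    (hdiff : ∀ x : V, τ.1 x ≠ τ'.1 x →
      x ∈ kbox k x₀ ∧ τ.1 x ∈ kbox k x₀ ∧ τ'.1 x ∈ kbox k x₀)
    (hagree : ∀ x ∈ kbox k x₀, τ.1 x = sig k c x) : τ = τ' := by
  classical
  set P : ℤ := 2 * (k : ℤ) + 2 with hPdef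
  have hPpos : (0 : ℤ) < P := by positivity
  set Λ : Finset V := kbox k x₀ with hΛdef
  set D : Finset V := Λ.filter (fun y => τ.1 y ≠ τ'.1 y) with hDdef
  have mem_D : ∀ y : V, y ∈ D ↔ τ.1 y ≠ τ'.1 y := by
    intro y
    constructor
    · intro h; exact (Finset.mem_filter.mp h).2
    · intro h; exact Finset.mem_filter.mpr ⟨(hdiff y h).1, h⟩
  have hDΛ : ∀ y ∈ D, y ∈ Λ := fun y hy => (Finset.mem_filter.mp hy).1
  have hclos : ∀ y ∈ D, τ.1 y ∈ D := by
    intro y hy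
    have hne := (mem_D y).mp hy
    rw [mem_D]
    intro heq
    apply hne
    have h1 : τ.1 (τ.1 y) = y := τ.2.2 y
    have h2 : τ'.1 (τ.1 y) = y := by rw [← heq]; exact h1
    have h3 : τ'.1 y = τ.1 y := by conv_lhs => rw [← h2, τ'.2.2]
    exact h3.symm
  have hclos' : ∀ y ∈ D, τ'.1 y ∈ D := by
    intro y hy
    have hne := (mem_D y).mp hy
    rw [mem_D]
    intro heq
    apply hne
    have h2 : τ'.1 (τ'.1 y) = y := τ'.2.2 y
    have h3 : τ.1 (τ'.1 y) = y := by rw [heq]; exact h2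
    conv_lhs => rw [← h3, τ.2.2]
  -- t-value
  set tt : V → ℤ := fun y => (y 1 - c) % P with htt
  have htt_mem : ∀ y : V, 0 ≤ tt y ∧ tt y < P := fun y =>
    ⟨Int.emod_nonneg _ (ne_of_gt hPpos), Int.emod_lt_of_pos _ hPpos⟩
  have hsig_even : ∀ y ∈ D, IsEven y → τ.1 y = y + dvec k (tt y) := by
    intro y hy he
    rw [hagree y (hDΛ y hy), sig_even he]
  have hsig_odd : ∀ y ∈ D, ¬ IsEven y → τ.1 y = y - dvec k (tt y) := by
    intro y hy he
    rw [hagree y (hDΛ y hy), sig_odd he]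
  set Dev : Finset V := D.filter IsEven with hDev
  -- the two sums agree for every weight
  have hsums : ∀ F : V → ℤ, ∑ x ∈ Dev, F (τ'.1 x) = ∑ x ∈ Dev, F (τ.1 x) := by
    intro F
    rw [sum_invol D τ'.1 hclos' (parity_partner τ') τ'.2.2 F,
      sum_invol D τ.1 hclos (parity_partner τ) τ.2.2 F]
  -- final extraction once `Dev = ∅`
  have hfinish : Dev = ∅ → τ = τ' := by
    intro hempty
    have hDempty : D = ∅ := by
      rw [Finset.eq_empty_iff_forall_notMem]
      intro y hy
      by_cases he : IsEven y
      · have hmem : y ∈ Dev := Finset.mem_filter.mpr ⟨hy, he⟩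
        rw [hempty] at hmem
        exact Finset.notMem_empty y hmem
      · have h2 := hclos y hy
        have h3 : IsEven (τ.1 y) := (parity_partner τ y).mpr he
        have hmem : τ.1 y ∈ Dev := Finset.mem_filter.mpr ⟨h2, h3⟩
        rw [hempty] at hmem
        exact Finset.notMem_empty _ hmem
    apply Subtype.ext
    funext x
    by_contra hne
    exact Finset.notMem_empty x (hDempty ▸ (mem_D x).mpr hne)
  -- case analysis
  by_cases hUp : ∃ x ∈ Dev, tt x = 0
  · by_cases hDn : ∃ x ∈ Dev, tt x = (k : ℤ) + 1
    · -- Case A : impossible inside a k-box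
      exfalso
      obtain ⟨x, hx, hxt⟩ := hUp
      obtain ⟨y, hy, hyt⟩ := hDn
      have hxΛ := hDΛ x (Finset.mem_filter.mp hx).1
      have hyΛ := hDΛ y (Finset.mem_filter.mp hy).1
      have hxb := kbox_coord (hΛdef ▸ hxΛ) 1
      have hyb := kbox_coord (hΛdef ▸ hyΛ) 1
      have ex : x 1 - c = tt x + P * ((x 1 - c) / P) := (Int.emod_add_mul_ediv _ _).symm
      have ey : y 1 - c = tt y + P * ((y 1 - c) / P) := (Int.emod_add_mul_ediv _ _).symm
      rw [hxt] at ex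
      rw [hyt] at ey
      set m : ℤ := (x 1 - c) / P - (y 1 - c) / P with hm
      have heq : P * m = (x 1 - y 1) + ((k : ℤ) + 1) := by
        rw [hm, mul_sub]
        omega
      have hbound : 2 ≤ P * m ∧ P * m ≤ 2 * (k : ℤ) := by
        constructor <;> [skip; skip] <;> rw [heq] <;> omega
      rcases le_or_gt m 0 with hm0 | hm0
      · have : P * m ≤ 0 := mul_nonpos_iff.mpr (Or.inl ⟨hPpos.le, hm0⟩)
        omega
      · have h1m : 1 ≤ m := hm0
        have : P * 1 ≤ P * m := mul_le_mul_of_nonneg_left h1m hPpos.le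
        omega
    · -- Case B : no down-slab vertices; use weight x 0 + x 2
      apply hfinish
      have htight : ∀ x ∈ Dev, τ'.1 x 0 + τ'.1 x 2 = x 0 + x 2 + 1 := by
        have hsum := hsums (fun y => y 0 + y 2)
        have heq2 : ∀ x ∈ Dev, (fun y : V => y 0 + y 2) (τ.1 x) = x 0 + x 2 + 1 := by
          intro x hx
          obtain ⟨hxD, hxe⟩ := Finset.mem_filter.mp hx
          rw [hsig_even x hxD hxe]
          have hne : tt x ≠ (k : ℤ) + 1 := fun h => hDn ⟨x, hx, h⟩
          by_cases h0 : tt x = 0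
          · rw [h0, dvec0]
            simp only [Pi.add_apply, uv20, uv22]
            omega
          · rw [dvecb k h0 hne]
            simp only [Pi.add_apply, uv00, uv02]
            omega
        rw [Finset.sum_congr rfl heq2] at hsum
        have hle : ∀ x ∈ Dev, (fun y : V => y 0 + y 2) (τ'.1 x) ≤ x 0 + x 2 + 1 :=
          fun x _ => F1_le τ' x
        exact fun x hx => ((Finset.sum_eq_sum_iff_of_le hle).mp hsum) x hx
      -- first: no up-slab vertices either
      have hup_empty : ∀ x ∈ Dev, tt x ≠ 0 := by
        by_contra hcon
        push_neg at hcon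
        obtain ⟨x₁, hx₁, ht₁⟩ := hcon
        set U : Finset V := Dev.filter (fun y => tt y = 0) with hU
        have hUne : U.Nonempty := ⟨x₁, Finset.mem_filter.mpr ⟨hx₁, ht₁⟩⟩
        obtain ⟨z, hz, hmax⟩ := Finset.exists_max_image U (fun y => y 0) hUne
        obtain ⟨hzDev, hzt⟩ := Finset.mem_filter.mp hz
        obtain ⟨hzD, hze⟩ := Finset.mem_filter.mp hzDev
        have hτz : τ.1 z = z + unitVec 2 := by
          rw [hsig_even z hzD hze, hzt, dvec0]
        have hτ'z : τ'.1 z = z + unitVec 0 := by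
          rcases F1_cases τ' z (htight z hzDev) with h | h
          · exact h
          · exfalso
            exact (mem_D z).mp hzD (by rw [hτz, h])
        -- move to the next element up-right
        set y : V := z + unitVec 0 with hy
        have hyD : y ∈ D := hτ'z ▸ hclos' z hzD
        have hyodd : ¬ IsEven y := by
          rw [hy]
          exact fun hcon => ((parity_add z 0).mp hcon) hze
        have hyt : tt y = 0 := by
          have : y 1 = z 1 := by rw [hy]; simp
          rw [htt]; simp only [this]; exact hzt
        have hτy : τ.1 y = y - unitVec 2 := by
          rw [hsig_odd y hyD hyodd, hyt, dvec0]
        set w : V := y - unitVec 2 with hw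
        have hwD : w ∈ D := hτy ▸ hclos y hyD
        have hwe : IsEven w := by
          rw [hw, parity_sub]
          exact hyodd
        have hwt : tt w = 0 := by
          have : w 1 = z 1 := by rw [hw, hy]; simp
          rw [htt]; simp only [this]; exact hzt
        have hwU : w ∈ U := Finset.mem_filter.mpr ⟨Finset.mem_filter.mpr ⟨hwD, hwe⟩, hwt⟩
        have : w 0 = z 0 + 1 := by rw [hw, hy]; simp
        have := hmax w hwU
        omega
      -- now all of `Dev` is in the buffer; kill it
      rw [Finset.eq_empty_iff_forall_notMem]
      intro x₁ hx₁
      have hne : Dev.Nonempty := ⟨x₁, hx₁⟩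
      obtain ⟨z, hzDev, hmax⟩ := Finset.exists_max_image Dev (fun y => y 2) hne
      obtain ⟨hzD, hze⟩ := Finset.mem_filter.mp hzDev
      have hzt0 : tt z ≠ 0 := hup_empty z hzDev
      have hztk : tt z ≠ (k : ℤ) + 1 := fun h => hDn ⟨z, hzDev, h⟩
      have hτz : τ.1 z = z + unitVec 0 := by
        rw [hsig_even z hzD hze, dvecb k hzt0 hztk]
      have hτ'z : τ'.1 z = z + unitVec 2 := by
        rcases F1_cases τ' z (htight z hzDev) with h | h
        · exfalso; exact (mem_D z).mp hzD (by rw [hτz, h])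
        · exact h
      set y : V := z + unitVec 2 with hy
      have hyD : y ∈ D := hτ'z ▸ hclos' z hzD
      have hyodd : ¬ IsEven y := by
        rw [hy]
        exact fun hcon => ((parity_add z 2).mp hcon) hze
      have hy1 : y 1 = z 1 := by rw [hy]; simp
      have hyt0 : tt y ≠ 0 := by rw [htt]; simp only [hy1]; exact hzt0
      have hytk : tt y ≠ (k : ℤ) + 1 := by rw [htt]; simp only [hy1]; exact hztk
      have hτy : τ.1 y = y - unitVec 0 := by
        rw [hsig_odd y hyD hyodd, dvecb k hyt0 hytk]
      set w : V := y - unitVec 0 with hw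
      have hwD : w ∈ D := hτy ▸ hclos y hyD
      have hwe : IsEven w := by
        rw [hw, parity_sub]
        exact hyodd
      have hwDev : w ∈ Dev := Finset.mem_filter.mpr ⟨hwD, hwe⟩
      have : w 2 = z 2 + 1 := by rw [hw, hy]; simp
      have := hmax w hwDev
      omega
  · -- Case C : no up-slab vertices; use weight x 0 - x 2
    apply hfinish
    have htight : ∀ x ∈ Dev, τ'.1 x 0 - τ'.1 x 2 = x 0 - x 2 + 1 := by
      have hsum := hsums (fun y => y 0 - y 2)
      have heq2 : ∀ x ∈ Dev, (fun y : V => y 0 - y 2) (τ.1 x) = x 0 - x 2 + 1 := by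
        intro x hx
        obtain ⟨hxD, hxe⟩ := Finset.mem_filter.mp hx
        rw [hsig_even x hxD hxe]
        have hne : tt x ≠ 0 := fun h => hUp ⟨x, hx, h⟩
        by_cases h0 : tt x = (k : ℤ) + 1
        · rw [h0, dveck]
          simp only [Pi.add_apply, Pi.neg_apply, uv20, uv22]
          omega
        · rw [dvecb k hne h0]
          simp only [Pi.add_apply, uv00, uv02]
          omega
      rw [Finset.sum_congr rfl heq2] at hsum
      have hle : ∀ x ∈ Dev, (fun y : V => y 0 - y 2) (τ'.1 x) ≤ x 0 - x 2 + 1 :=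
        fun x _ => F2_le τ' x
      exact fun x hx => ((Finset.sum_eq_sum_iff_of_le hle).mp hsum) x hx
    -- first: no down-slab vertices
    have hdn_empty : ∀ x ∈ Dev, tt x ≠ (k : ℤ) + 1 := by
      by_contra hcon
      push_neg at hcon
      obtain ⟨x₁, hx₁, ht₁⟩ := hcon
      set U : Finset V := Dev.filter (fun y => tt y = (k : ℤ) + 1) with hU
      have hUne : U.Nonempty := ⟨x₁, Finset.mem_filter.mpr ⟨hx₁, ht₁⟩⟩
      obtain ⟨z, hz, hmax⟩ := Finset.exists_max_image U (fun y => y 0) hUne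
      obtain ⟨hzDev, hzt⟩ := Finset.mem_filter.mp hz
      obtain ⟨hzD, hze⟩ := Finset.mem_filter.mp hzDev
      have hτz : τ.1 z = z - unitVec 2 := by
        rw [hsig_even z hzD hze, hzt, dveck]
        abel
      have hτ'z : τ'.1 z = z + unitVec 0 := by
        rcases F2_cases τ' z (htight z hzDev) with h | h
        · exact h
        · exfalso; exact (mem_D z).mp hzD (by rw [hτz, h])
      set y : V := z + unitVec 0 with hy
      have hyD : y ∈ D := hτ'z ▸ hclos' z hzD
      have hyodd : ¬ IsEven y := by
        rw [hy]
        exact fun hcon2 => ((parity_add z 0).mp hcon2) hze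
      have hy1 : y 1 = z 1 := by rw [hy]; simp
      have hyt : tt y = (k : ℤ) + 1 := by rw [htt]; simp only [hy1]; exact hzt
      have hτy : τ.1 y = y + unitVec 2 := by
        rw [hsig_odd y hyD hyodd, hyt, dveck]
        abel
      set w : V := y + unitVec 2 with hw
      have hwD : w ∈ D := hτy ▸ hclos y hyD
      have hwe : IsEven w := by
        rw [hw, parity_add]
        exact hyodd
      have hwt : tt w = (k : ℤ) + 1 := by
        have : w 1 = z 1 := by rw [hw, hy]; simp
        rw [htt]; simp only [this]; exact hzt
      have hwU : w ∈ U := Finset.mem_filter.mpr ⟨Finset.mem_filter.mpr ⟨hwD, hwe⟩, hwt⟩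
      have : w 0 = z 0 + 1 := by rw [hw, hy]; simp
      have := hmax w hwU
      omega
    -- now all of `Dev` is in the buffer; kill it
    rw [Finset.eq_empty_iff_forall_notMem]
    intro x₁ hx₁
    have hne : Dev.Nonempty := ⟨x₁, hx₁⟩
    obtain ⟨z, hzDev, hmin⟩ := Finset.exists_min_image Dev (fun y => y 2) hne
    obtain ⟨hzD, hze⟩ := Finset.mem_filter.mp hzDev
    have hzt0 : tt z ≠ 0 := fun h => hUp ⟨z, hzDev, h⟩
    have hztk : tt z ≠ (k : ℤ) + 1 := hdn_empty z hzDev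
    have hτz : τ.1 z = z + unitVec 0 := by
      rw [hsig_even z hzD hze, dvecb k hzt0 hztk]
    have hτ'z : τ'.1 z = z - unitVec 2 := by
      rcases F2_cases τ' z (htight z hzDev) with h | h
      · exfalso; exact (mem_D z).mp hzD (by rw [hτz, h])
      · exact h
    set y : V := z - unitVec 2 with hy
    have hyD : y ∈ D := hτ'z ▸ hclos' z hzD
    have hyodd : ¬ IsEven y := by
      rw [hy]
      exact fun hcon => ((parity_sub z 2).mp hcon) hze
    have hy1 : y 1 = z 1 := by rw [hy]; simp
    have hyt0 : tt y ≠ 0 := by rw [htt]; simp only [hy1]; exact hzt0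
    have hytk : tt y ≠ (k : ℤ) + 1 := by rw [htt]; simp only [hy1]; exact hztk
    have hτy : τ.1 y = y - unitVec 0 := by
      rw [hsig_odd y hyD hyodd, dvecb k hyt0 hytk]
    set w : V := y - unitVec 0 with hw
    have hwD : w ∈ D := hτy ▸ hclos y hyD
    have hwe : IsEven w := by
      rw [hw, parity_sub]
      exact hyodd
    have hwDev : w ∈ Dev := Finset.mem_filter.mpr ⟨hwD, hwe⟩
    have : w 2 = z 2 - 1 := by rw [hw, hy]; simp
    have := hmin w hwDev
    omega

end Dimers

namespace Dimers

open scoped ENNReal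

lemma mu_cyl_zero (k : ℕ) {Λ : Finset V} {f : V → V}
    (h : ∀ c : ℤ, ¬ ∀ x ∈ Λ, sig k c x = f x) :
    mu k {σ : Omega | ∀ x ∈ Λ, σ.1 x = f x} = 0 := by
  rw [mu_apply k (cyl_measurable Λ f)]
  have : ∀ c ∈ Finset.Ico (0 : ℤ) (2 * (k : ℤ) + 2),
      ({σ : Omega | ∀ x ∈ Λ, σ.1 x = f x}).indicator (1 : Omega → ℝ≥0∞) (Sc k c) = 0 := by
    intro c _
    have hnm : Sc k c ∉ {σ : Omega | ∀ x ∈ Λ, σ.1 x = f x} := h c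
    exact Set.indicator_of_notMem hnm 1
  rw [Finset.sum_congr rfl this, Finset.sum_const, smul_zero, mul_zero]

lemma mu_kgibbs (k : ℕ) : IsKGibbs k (mu k) := by
  refine ⟨mu_invariant k, fun x₀ => ?_⟩
  intro τ τ' hyp
  by_cases hex : ∃ c : ℤ, ∀ x ∈ kbox k x₀, sig k c x = τ.1 x
  · obtain ⟨c, hc⟩ := hex
    have hkey : τ = τ' := key k c x₀ τ τ' hyp (fun x hx => (hc x hx).symm)
    rw [hkey]
  · by_cases hex' : ∃ c : ℤ, ∀ x ∈ kbox k x₀, sig k c x = τ'.1 x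
    · exfalso
      obtain ⟨c, hc⟩ := hex'
      have hyp' : ∀ x : V, τ'.1 x ≠ τ.1 x →
          x ∈ kbox k x₀ ∧ τ'.1 x ∈ kbox k x₀ ∧ τ.1 x ∈ kbox k x₀ := by
        intro x hne
        obtain ⟨h1, h2, h3⟩ := hyp x (Ne.symm hne)
        exact ⟨h1, h3, h2⟩
      have hkey : τ' = τ := key k c x₀ τ' τ hyp' (fun x hx => (hc x hx).symm)
      exact hex ⟨c, fun x hx => (hkey ▸ hc x hx : sig k c x = τ.1 x)⟩
    · rw [mu_cyl_zero k (fun c hc => hex ⟨c, hc⟩),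
        mu_cyl_zero k (fun c hc => hex' ⟨c, hc⟩)]

end Dimers

namespace Dimers

open scoped ENNReal

-- ### the long-cycle flip

def C1 (k : ℕ) (x : V) : Prop :=
  x 2 = 0 ∧ -(k : ℤ) ≤ x 0 ∧ x 0 ≤ 0 ∧ x 1 = -x 0
def C2 (k : ℕ) (x : V) : Prop :=
  x 2 = 0 ∧ -(k : ℤ) ≤ x 0 ∧ x 0 ≤ 0 ∧ x 1 = -x 0 + 1
def C3 (k : ℕ) (x : V) : Prop :=
  x 2 = (k : ℤ) + 1 ∧ -(k : ℤ) ≤ x 0 ∧ x 0 ≤ 0 ∧ x 1 = x 0 + (k : ℤ)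
def C4 (k : ℕ) (x : V) : Prop :=
  x 2 = (k : ℤ) + 1 ∧ -(k : ℤ) ≤ x 0 ∧ x 0 ≤ 0 ∧ x 1 = x 0 + (k : ℤ) + 1
def C5 (k : ℕ) (x : V) : Prop :=
  x 1 = 0 ∧ 1 ≤ x 2 ∧ x 2 ≤ (k : ℤ) ∧ x 0 = -x 2
def C6 (k : ℕ) (x : V) : Prop :=
  x 1 = 0 ∧ 1 ≤ x 2 ∧ x 2 ≤ (k : ℤ) ∧ x 0 = -x 2 + 1
def C7 (k : ℕ) (x : V) : Prop :=
  x 1 = (k : ℤ) + 1 ∧ 1 ≤ x 2 ∧ x 2 ≤ (k : ℤ) ∧ x 0 = x 2 - (k : ℤ) - 1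
def C8 (k : ℕ) (x : V) : Prop :=
  x 1 = (k : ℤ) + 1 ∧ 1 ≤ x 2 ∧ x 2 ≤ (k : ℤ) ∧ x 0 = x 2 - (k : ℤ)

instance (k : ℕ) (x : V) : Decidable (C1 k x) := by unfold C1; infer_instance
instance (k : ℕ) (x : V) : Decidable (C2 k x) := by unfold C2; infer_instance
instance (k : ℕ) (x : V) : Decidable (C3 k x) := by unfold C3; infer_instance
instance (k : ℕ) (x : V) : Decidable (C4 k x) := by unfold C4; infer_instance
instance (k : ℕ) (x : V) : Decidable (C5 k x) := by unfold C5; infer_instance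
instance (k : ℕ) (x : V) : Decidable (C6 k x) := by unfold C6; infer_instance
instance (k : ℕ) (x : V) : Decidable (C7 k x) := by unfold C7; infer_instance
instance (k : ℕ) (x : V) : Decidable (C8 k x) := by unfold C8; infer_instance

def InC (k : ℕ) (x : V) : Prop :=
  C1 k x ∨ C2 k x ∨ C3 k x ∨ C4 k x ∨ C5 k x ∨ C6 k x ∨ C7 k x ∨ C8 k x

/-- the tiling obtained from `σ₀` by rotating a long alternating cycle. -/
def sprime (k : ℕ) : V → V := fun x =>
  if C1 k x then x + unitVec 1
  else if C2 k x then x - unitVec 1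
  else if C3 k x then x + unitVec 1
  else if C4 k x then x - unitVec 1
  else if C5 k x then x + unitVec 0
  else if C6 k x then x - unitVec 0
  else if C7 k x then x + unitVec 0
  else if C8 k x then x - unitVec 0
  else sig k 0 x

lemma nC1_of_C2 {k x} (h : C2 k x) : ¬ C1 k x := by simp only [C1, C2] at *; omega
lemma sprime_of_C1 {k x} (h : C1 k x) : sprime k x = x + unitVec 1 := by
  rw [sprime, if_pos h]
lemma sprime_of_C2 {k x} (h : C2 k x) : sprime k x = x - unitVec 1 := by
  rw [sprime, if_neg (nC1_of_C2 h), if_pos h]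
lemma sprime_of_C3 {k x} (h : C3 k x) : sprime k x = x + unitVec 1 := by
  rw [sprime, if_neg (by simp only [C1, C3] at *; omega),
    if_neg (by simp only [C2, C3] at *; omega), if_pos h]
lemma sprime_of_C4 {k x} (h : C4 k x) : sprime k x = x - unitVec 1 := by
  rw [sprime, if_neg (by simp only [C1, C4] at *; omega),
    if_neg (by simp only [C2, C4] at *; omega),
    if_neg (by simp only [C3, C4] at *; omega), if_pos h]
lemma sprime_of_C5 {k x} (h : C5 k x) : sprime k x = x + unitVec 0 := by
  rw [sprime, if_neg (by simp only [C1, C5] at *; omega),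
    if_neg (by simp only [C2, C5] at *; omega),
    if_neg (by simp only [C3, C5] at *; omega),
    if_neg (by simp only [C4, C5] at *; omega), if_pos h]
lemma sprime_of_C6 {k x} (h : C6 k x) : sprime k x = x - unitVec 0 := by
  rw [sprime, if_neg (by simp only [C1, C6] at *; omega),
    if_neg (by simp only [C2, C6] at *; omega),
    if_neg (by simp only [C3, C6] at *; omega),
    if_neg (by simp only [C4, C6] at *; omega),
    if_neg (by simp only [C5, C6] at *; omega), if_pos h]
lemma sprime_of_C7 {k x} (h : C7 k x) : sprime k x = x + unitVec 0 := by
  rw [sprime, if_neg (by simp only [C1, C7] at *; omega),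
    if_neg (by simp only [C2, C7] at *; omega),
    if_neg (by simp only [C3, C7] at *; omega),
    if_neg (by simp only [C4, C7] at *; omega),
    if_neg (by simp only [C5, C7] at *; omega),
    if_neg (by simp only [C6, C7] at *; omega), if_pos h]
lemma sprime_of_C8 {k x} (h : C8 k x) : sprime k x = x - unitVec 0 := by
  rw [sprime, if_neg (by simp only [C1, C8] at *; omega),
    if_neg (by simp only [C2, C8] at *; omega),
    if_neg (by simp only [C3, C8] at *; omega),
    if_neg (by simp only [C4, C8] at *; omega),
    if_neg (by simp only [C5, C8] at *; omega),
    if_neg (by simp only [C6, C8] at *; omega),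
    if_neg (by simp only [C7, C8] at *; omega), if_pos h]
lemma sprime_of_not {k x} (h : ¬ InC k x) : sprime k x = sig k 0 x := by
  rw [InC] at h
  push_neg at h
  obtain ⟨h1, h2, h3, h4, h5, h6, h7, h8⟩ := h
  rw [sprime, if_neg h1, if_neg h2, if_neg h3, if_neg h4, if_neg h5, if_neg h6,
    if_neg h7, if_neg h8]

end Dimers

namespace Dimers

-- ### evaluation of `σ₀` on the cycle region

lemma sig0_up {k : ℕ} {x : V} (he : IsEven x) (h1 : x 1 = 0) :
    sig k 0 x = x + unitVec 2 := by
  rw [sig_even he, h1]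
  norm_num [dvec0]

lemma sig0_up' {k : ℕ} {x : V} (ho : ¬ IsEven x) (h1 : x 1 = 0) :
    sig k 0 x = x - unitVec 2 := by
  rw [sig_odd ho, h1]
  norm_num [dvec0]

lemma sig0_dn {k : ℕ} {x : V} (he : IsEven x) (h1 : x 1 = (k : ℤ) + 1) :
    sig k 0 x = x - unitVec 2 := by
  rw [sig_even he, h1]
  have h2 : ((k : ℤ) + 1 - 0) % (2 * (k : ℤ) + 2) = (k : ℤ) + 1 := by
    rw [sub_zero]
    exact Int.emod_eq_of_lt (by positivity) (by omega)
  rw [h2, dveck]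
  abel

lemma sig0_dn' {k : ℕ} {x : V} (ho : ¬ IsEven x) (h1 : x 1 = (k : ℤ) + 1) :
    sig k 0 x = x + unitVec 2 := by
  rw [sig_odd ho, h1]
  have h2 : ((k : ℤ) + 1 - 0) % (2 * (k : ℤ) + 2) = (k : ℤ) + 1 := by
    rw [sub_zero]
    exact Int.emod_eq_of_lt (by positivity) (by omega)
  rw [h2, dveck]
  abel

lemma sig0_buf {k : ℕ} {x : V} (he : IsEven x) (hlo : 1 ≤ x 1) (hhi : x 1 ≤ (k : ℤ)) :
    sig k 0 x = x + unitVec 0 := by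
  rw [sig_even he]
  have h2 : (x 1 - 0) % (2 * (k : ℤ) + 2) = x 1 := by
    rw [sub_zero]
    exact Int.emod_eq_of_lt (by omega) (by omega)
  rw [h2, dvecb k (by omega) (by omega)]

lemma sig0_buf' {k : ℕ} {x : V} (ho : ¬ IsEven x) (hlo : 1 ≤ x 1) (hhi : x 1 ≤ (k : ℤ)) :
    sig k 0 x = x - unitVec 0 := by
  rw [sig_odd ho]
  have h2 : (x 1 - 0) % (2 * (k : ℤ) + 2) = x 1 := by
    rw [sub_zero]
    exact Int.emod_eq_of_lt (by omega) (by omega)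
  rw [h2, dvecb k (by omega) (by omega)]

-- ### the cycle region is closed under `σ₀`

lemma InC_closed {k : ℕ} (hk : 1 ≤ k) {y : V} (h : InC k y) : InC k (sig k 0 y) := by
  have hk' : (1 : ℤ) ≤ (k : ℤ) := by exact_mod_cast hk
  rcases h with h | h | h | h | h | h | h | h
  · -- C1 : bottom, lower row
    obtain ⟨h2, h0l, h0r, h1⟩ := h
    have he : IsEven y := by rw [isEven_iff]; omega
    by_cases ha : y 0 = 0
    · rw [sig0_up he (by omega)]
      refine Or.inr (Or.inr (Or.inr (Or.inr (Or.inr (Or.inl ?_)))))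
      simp only [C6, Pi.add_apply, uv20, uv21, uv22]
      omega
    · rw [sig0_buf he (by omega) (by omega)]
      refine Or.inr (Or.inl ?_)
      simp only [C2, Pi.add_apply, uv00, uv01, uv02]
      omega
  · -- C2 : bottom, upper row
    obtain ⟨h2, h0l, h0r, h1⟩ := h
    have ho : ¬ IsEven y := by rw [isEven_iff]; omega
    by_cases ha : y 0 = -(k : ℤ)
    · rw [sig0_dn' ho (by omega)]
      refine Or.inr (Or.inr (Or.inr (Or.inr (Or.inr (Or.inr (Or.inl ?_))))))
      simp only [C7, Pi.add_apply, uv20, uv21, uv22]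
      omega
    · rw [sig0_buf' ho (by omega) (by omega)]
      refine Or.inl ?_
      simp only [C1, Pi.sub_apply, uv00, uv01, uv02]
      omega
  · -- C3 : top, lower row
    obtain ⟨h2, h0l, h0r, h1⟩ := h
    have ho : ¬ IsEven y := by rw [isEven_iff]; omega
    by_cases ha : y 0 = -(k : ℤ)
    · rw [sig0_up' ho (by omega)]
      refine Or.inr (Or.inr (Or.inr (Or.inr (Or.inl ?_))))
      simp only [C5, Pi.sub_apply, uv20, uv21, uv22]
      omega
    · rw [sig0_buf' ho (by omega) (by omega)]
      refine Or.inr (Or.inr (Or.inr (Or.inl ?_)))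
      simp only [C4, Pi.sub_apply, uv00, uv01, uv02]
      omega
  · -- C4 : top, upper row
    obtain ⟨h2, h0l, h0r, h1⟩ := h
    have he : IsEven y := by rw [isEven_iff]; omega
    by_cases ha : y 0 = 0
    · rw [sig0_dn he (by omega)]
      refine Or.inr (Or.inr (Or.inr (Or.inr (Or.inr (Or.inr (Or.inr ?_))))))
      simp only [C8, Pi.sub_apply, uv20, uv21, uv22]
      omega
    · rw [sig0_buf he (by omega) (by omega)]
      refine Or.inr (Or.inr (Or.inl ?_))
      simp only [C3, Pi.add_apply, uv00, uv01, uv02]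
      omega
  · -- C5 : left pillar, outer column
    obtain ⟨h1, h2l, h2r, h0⟩ := h
    have he : IsEven y := by rw [isEven_iff]; omega
    rw [sig0_up he h1]
    by_cases hb : y 2 = (k : ℤ)
    · refine Or.inr (Or.inr (Or.inl ?_))
      simp only [C3, Pi.add_apply, uv20, uv21, uv22]
      omega
    · refine Or.inr (Or.inr (Or.inr (Or.inr (Or.inr (Or.inl ?_)))))
      simp only [C6, Pi.add_apply, uv20, uv21, uv22]
      omega
  · -- C6 : left pillar, inner column
    obtain ⟨h1, h2l, h2r, h0⟩ := h
    have ho : ¬ IsEven y := by rw [isEven_iff]; omega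
    rw [sig0_up' ho h1]
    by_cases hb : y 2 = 1
    · refine Or.inl ?_
      simp only [C1, Pi.sub_apply, uv20, uv21, uv22]
      omega
    · refine Or.inr (Or.inr (Or.inr (Or.inr (Or.inl ?_))))
      simp only [C5, Pi.sub_apply, uv20, uv21, uv22]
      omega
  · -- C7 : right pillar, outer column
    obtain ⟨h1, h2l, h2r, h0⟩ := h
    have he : IsEven y := by rw [isEven_iff]; omega
    rw [sig0_dn he h1]
    by_cases hb : y 2 = 1
    · refine Or.inr (Or.inl ?_)
      simp only [C2, Pi.sub_apply, uv20, uv21, uv22]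
      omega
    · refine Or.inr (Or.inr (Or.inr (Or.inr (Or.inr (Or.inr (Or.inr ?_))))))
      simp only [C8, Pi.sub_apply, uv20, uv21, uv22]
      omega
  · -- C8 : right pillar, inner column
    obtain ⟨h1, h2l, h2r, h0⟩ := h
    have ho : ¬ IsEven y := by rw [isEven_iff]; omega
    rw [sig0_dn' ho h1]
    by_cases hb : y 2 = (k : ℤ)
    · refine Or.inr (Or.inr (Or.inr (Or.inl ?_)))
      simp only [C4, Pi.add_apply, uv20, uv21, uv22]
      omega
    · refine Or.inr (Or.inr (Or.inr (Or.inr (Or.inr (Or.inr (Or.inl ?_))))))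
      simp only [C7, Pi.add_apply, uv20, uv21, uv22]
      omega

end Dimers

namespace Dimers

open scoped ENNReal

-- ### pairing of cycle cases under `sprime`

lemma pc12 {k : ℕ} {x : V} (h : C1 k x) : C2 k (x + unitVec 1) := by
  simp only [C1, C2, Pi.add_apply, uv10, uv11, uv12] at *
  omega
lemma pc21 {k : ℕ} {x : V} (h : C2 k x) : C1 k (x - unitVec 1) := by
  simp only [C1, C2, Pi.sub_apply, uv10, uv11, uv12] at *
  omega
lemma pc34 {k : ℕ} {x : V} (h : C3 k x) : C4 k (x + unitVec 1) := by
  simp only [C3, C4, Pi.add_apply, uv10, uv11, uv12] at *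
  omega
lemma pc43 {k : ℕ} {x : V} (h : C4 k x) : C3 k (x - unitVec 1) := by
  simp only [C3, C4, Pi.sub_apply, uv10, uv11, uv12] at *
  omega
lemma pc56 {k : ℕ} {x : V} (h : C5 k x) : C6 k (x + unitVec 0) := by
  simp only [C5, C6, Pi.add_apply, uv00, uv01, uv02] at *
  omega
lemma pc65 {k : ℕ} {x : V} (h : C6 k x) : C5 k (x - unitVec 0) := by
  simp only [C5, C6, Pi.sub_apply, uv00, uv01, uv02] at *
  omega
lemma pc78 {k : ℕ} {x : V} (h : C7 k x) : C8 k (x + unitVec 0) := by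
  simp only [C7, C8, Pi.add_apply, uv00, uv01, uv02] at *
  omega
lemma pc87 {k : ℕ} {x : V} (h : C8 k x) : C7 k (x - unitVec 0) := by
  simp only [C7, C8, Pi.sub_apply, uv00, uv01, uv02] at *
  omega

lemma InC_sprime {k : ℕ} {x : V} (h : InC k x) : InC k (sprime k x) := by
  rcases h with h | h | h | h | h | h | h | h
  · rw [sprime_of_C1 h]; exact Or.inr (Or.inl (pc12 h))
  · rw [sprime_of_C2 h]; exact Or.inl (pc21 h)
  · rw [sprime_of_C3 h]; exact Or.inr (Or.inr (Or.inr (Or.inl (pc34 h))))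
  · rw [sprime_of_C4 h]; exact Or.inr (Or.inr (Or.inl (pc43 h)))
  · rw [sprime_of_C5 h]
    exact Or.inr (Or.inr (Or.inr (Or.inr (Or.inr (Or.inl (pc56 h))))))
  · rw [sprime_of_C6 h]
    exact Or.inr (Or.inr (Or.inr (Or.inr (Or.inl (pc65 h)))))
  · rw [sprime_of_C7 h]
    exact Or.inr (Or.inr (Or.inr (Or.inr (Or.inr (Or.inr (Or.inr (pc78 h)))))))
  · rw [sprime_of_C8 h]
    exact Or.inr (Or.inr (Or.inr (Or.inr (Or.inr (Or.inr (Or.inl (pc87 h)))))))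

lemma isTiling_sprime (k : ℕ) (hk : 1 ≤ k) : IsTiling (sprime k) := by
  constructor
  · intro x
    show Adj x (sprime k x)
    by_cases h1 : C1 k x
    · rw [sprime_of_C1 h1]; exact ⟨1, Or.inl rfl⟩
    by_cases h2 : C2 k x
    · rw [sprime_of_C2 h2]; exact ⟨1, Or.inr (by abel)⟩
    by_cases h3 : C3 k x
    · rw [sprime_of_C3 h3]; exact ⟨1, Or.inl rfl⟩
    by_cases h4 : C4 k x
    · rw [sprime_of_C4 h4]; exact ⟨1, Or.inr (by abel)⟩
    by_cases h5 : C5 k x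
    · rw [sprime_of_C5 h5]; exact ⟨0, Or.inl rfl⟩
    by_cases h6 : C6 k x
    · rw [sprime_of_C6 h6]; exact ⟨0, Or.inr (by abel)⟩
    by_cases h7 : C7 k x
    · rw [sprime_of_C7 h7]; exact ⟨0, Or.inl rfl⟩
    by_cases h8 : C8 k x
    · rw [sprime_of_C8 h8]; exact ⟨0, Or.inr (by abel)⟩
    have hn : ¬ InC k x := by
      rw [InC]
      push_neg
      exact ⟨h1, h2, h3, h4, h5, h6, h7, h8⟩
    rw [sprime_of_not hn]
    exact (isTiling_sig k 0).1 x
  · intro x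
    by_cases hn : InC k x
    · rcases hn with h | h | h | h | h | h | h | h
      · rw [sprime_of_C1 h, sprime_of_C2 (pc12 h)]; abel
      · rw [sprime_of_C2 h, sprime_of_C1 (pc21 h)]; abel
      · rw [sprime_of_C3 h, sprime_of_C4 (pc34 h)]; abel
      · rw [sprime_of_C4 h, sprime_of_C3 (pc43 h)]; abel
      · rw [sprime_of_C5 h, sprime_of_C6 (pc56 h)]; abel
      · rw [sprime_of_C6 h, sprime_of_C5 (pc65 h)]; abel
      · rw [sprime_of_C7 h, sprime_of_C8 (pc78 h)]; abel
      · rw [sprime_of_C8 h, sprime_of_C7 (pc87 h)]; abel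
    · rw [sprime_of_not hn]
      have hn2 : ¬ InC k (sig k 0 x) := by
        intro hc
        have := InC_closed hk hc
        rw [(isTiling_sig k 0).2 x] at this
        exact hn this
      rw [sprime_of_not hn2]
      exact (isTiling_sig k 0).2 x

/-- the rotated tiling as an element of `Omega`. -/
def Sp (k : ℕ) (hk : 1 ≤ k) : Omega := ⟨sprime k, isTiling_sprime k hk⟩

end Dimers

namespace Dimers

open scoped ENNReal

-- ### the window for the Gibbs violation

noncomputable def Lstar (k : ℕ) : Finset V :=
  Fintype.piFinset fun i : Fin 3 =>
    Finset.Icc (![-(k : ℤ), 0, 0] i) (![0, (k : ℤ) + 1, (k : ℤ) + 1] i)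

lemma InC_Lstar {k : ℕ} {x : V} (h : InC k x) : x ∈ Lstar k := by
  rw [Lstar, Fintype.mem_piFinset]
  intro i
  fin_cases i
  · show x 0 ∈ Finset.Icc (-(k : ℤ)) 0
    rw [Finset.mem_Icc]
    rcases h with h | h | h | h | h | h | h | h <;>
      simp only [C1, C2, C3, C4, C5, C6, C7, C8] at h <;> omega
  · show x 1 ∈ Finset.Icc (0 : ℤ) ((k : ℤ) + 1)
    rw [Finset.mem_Icc]
    rcases h with h | h | h | h | h | h | h | h <;>
      simp only [C1, C2, C3, C4, C5, C6, C7, C8] at h <;> omega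
  · show x 2 ∈ Finset.Icc (0 : ℤ) ((k : ℤ) + 1)
    rw [Finset.mem_Icc]
    rcases h with h | h | h | h | h | h | h | h <;>
      simp only [C1, C2, C3, C4, C5, C6, C7, C8] at h <;> omega

def vz : V := fun _ => 0

lemma vz_C1 (k : ℕ) : C1 k vz := by
  refine ⟨rfl, ?_, ?_, ?_⟩
  · show -(k : ℤ) ≤ 0
    omega
  · show (0 : ℤ) ≤ 0
    omega
  · show (0 : ℤ) = -0
    omega

lemma vz_Lstar (k : ℕ) : vz ∈ Lstar k := InC_Lstar (Or.inl (vz_C1 k))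

lemma sig_ne_sprime_vz (k : ℕ) (c : ℤ) : ¬ sig k c vz = sprime k vz := by
  intro h
  rw [sprime_of_C1 (vz_C1 k)] at h
  have hve : IsEven vz := by
    show ((0 : ℤ) + 0 + 0) % 2 = 0
    norm_num
  have h1 : (vz + dvec k ((vz 1 - c) % (2 * (k : ℤ) + 2))) 1 = (vz + unitVec 1) 1 := by
    rw [← sig_even hve, h]
  simp only [Pi.add_apply, dvec_one, uv11] at h1
  have h2 : (0 : ℤ) + 0 = 0 + 1 := h1
  omega

lemma mu_cyl_sc_ne_zero (k : ℕ) :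
    mu k {σ : Omega | ∀ x ∈ Lstar k, σ.1 x = sig k 0 x} ≠ 0 := by
  rw [mu_apply k (cyl_measurable (Lstar k) (sig k 0))]
  intro hzero
  rcases mul_eq_zero.mp hzero with hbad | hbad
  · exact (ENNReal.inv_ne_zero.mpr (two_k_ne_top k)) hbad
  · rw [Finset.sum_eq_zero_iff] at hbad
    have h0 : (0 : ℤ) ∈ Finset.Ico (0 : ℤ) (2 * (k : ℤ) + 2) := by
      rw [Finset.mem_Ico]
      omega
    have := hbad 0 h0
    have hmem : Sc k 0 ∈ {σ : Omega | ∀ x ∈ Lstar k, σ.1 x = sig k 0 x} :=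
      fun x _ => rfl
    rw [Set.indicator_of_mem hmem] at this
    exact one_ne_zero this

lemma hdiff_star (k : ℕ) (hk : 1 ≤ k) : ∀ x : V,
    (Sc k 0).1 x ≠ (Sp k hk).1 x →
    x ∈ Lstar k ∧ (Sc k 0).1 x ∈ Lstar k ∧ (Sp k hk).1 x ∈ Lstar k := by
  intro x hne
  have hInC : InC k x := by
    by_contra hn
    exact hne (sprime_of_not hn).symm
  exact ⟨InC_Lstar hInC, InC_Lstar (InC_closed hk hInC), InC_Lstar (InC_sprime hInC)⟩

theorem mu_not_gibbs (k : ℕ) (hk : 1 ≤ k) : ¬ IsGibbs (mu k) := by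
  rintro ⟨_, hG⟩
  have h := hG (Lstar k) (Sc k 0) (Sp k hk) (hdiff_star k hk)
  apply mu_cyl_sc_ne_zero k
  have hz : mu k {σ : Omega | ∀ x ∈ Lstar k, σ.1 x = (Sp k hk).1 x} = 0 := by
    apply mu_cyl_zero
    intro c hall
    exact sig_ne_sprime_vz k c (hall vz (vz_Lstar k))
  calc mu k {σ : Omega | ∀ x ∈ Lstar k, σ.1 x = sig k 0 x}
      = mu k {σ : Omega | ∀ x ∈ Lstar k, σ.1 x = (Sp k hk).1 x} := h
    _ = 0 := hz

end Dimers

namespace Dimers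

/-- **`k`-Gibbs measures need not be Gibbs.** For every `k ≥ 2` there is an invariant Borel
probability measure on tilings that is `k`-Gibbs but not Gibbs. -/
theorem statement19 (k : ℕ) (hk : 2 ≤ k) :
    ∃ μ : Measure Omega, IsProbabilityMeasure μ ∧ IsKGibbs k μ ∧ ¬ IsGibbs μ := by
  exact ⟨mu k, mu_prob k, mu_kgibbs k, mu_not_gibbs k (by omega)⟩

end Dimers
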